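/- arXiv:1906.02310 — 13 statements merged into one kernel-verified Lean document; each statement's English description precedes it below -/
import Mathlib

section
/- Given a split extension of unitary magmas (X, A, B, κ, λ, α, β), the map φ : A → X ⋊ B defined by φ(a) = (λ(a), α(a)) and the map ψ : X ⋊ B → A defined by ψ(x,b) = κ(x) + β(b) are mutually inverse bijections, where X ⋊ B carries the action b·x = λ(β(b) + κ(x)). -/
/-- Semidirect product addition on `X × B` for an action `act : B → X → X`. -/
def sadd {X B : Type*} [AddZeroClass X] [AddZeroClass B]
    (act : B → X → X) (p q : X × B) : X × B :=
  (p.1 + act p.2 q.1, p.2 + q.2)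

/-- A split extension of unitary magmas `X → A ⇄ B` (Definition 1.4 of
Gran–Janelidze–Sobral): `kap`, `al`, `be` are magma homomorphisms, `lam`
preserves zero, and the equalities (11)-(17) hold. -/
structure SplitExt (X A B : Type*) [AddZeroClass X] [AddZeroClass A] [AddZeroClass B] where
  kap : X → A
  al : A → B
  be : B → A
  lam : A → X
  kap_zero : kap 0 = 0
  kap_add : ∀ x x', kap (x + x') = kap x + kap x'
  al_zero : al 0 = 0
  al_add : ∀ a a', al (a + a') = al a + al a'
  be_zero : be 0 = 0
  be_add : ∀ b b', be (b + b') = be b + be b'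
  lam_zero : lam 0 = 0
  lam_kap : ∀ x, lam (kap x) = x
  al_be : ∀ b, al (be b) = b
  lam_be : ∀ b, lam (be b) = 0
  al_kap : ∀ x, al (kap x) = 0
  split : ∀ a, kap (lam a) + be (al a) = a
  nondis : ∀ x b, lam (kap x + be b) = x
  assoc_left : ∀ x b a, kap x + (be b + a) = (kap x + be b) + a
  assoc_mid : ∀ x a b, kap x + (a + be b) = (kap x + a) + be b
  assoc_right : ∀ a x b, a + (kap x + be b) = (a + kap x) + be b

/-- The action of `B` on `X` associated to a split extension: `b·x = λ(β(b)+κ(x))`. -/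
def SplitExt.act {X A B : Type*} [AddZeroClass X] [AddZeroClass A] [AddZeroClass B]
    (E : SplitExt X A B) (b : B) (x : X) : X :=
  E.lam (E.be b + E.kap x)

/-- Lemma 1.6: the maps `φ(a) = (λ(a), α(a))` and `ψ(x,b) = κ(x)+β(b)` are
mutually inverse bijections between `A` and `X ⋊ B` (the latter carrying the
associated action `b·x = λ(β(b)+κ(x))`). -/
theorem stmt4 {X A B : Type*} [AddZeroClass X] [AddZeroClass A] [AddZeroClass B]
    (E : SplitExt X A B) :
    (∀ a : A, E.kap (E.lam a, E.al a).1 + E.be (E.lam a, E.al a).2 = a) ∧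
    (∀ p : X × B, ((E.lam (E.kap p.1 + E.be p.2), E.al (E.kap p.1 + E.be p.2)) : X × B) = p) := by
  refine ⟨E.split, fun p => ?_⟩
  have : E.al (E.kap p.1 + E.be p.2) = p.2 := by
    rw [E.al_add, E.al_kap, E.al_be, zero_add]
  simp [E.nondis, this]
end

section
/- Given a split extension of unitary magmas (X, A, B, κ, λ, α, β) with associated action b·x = λ(β(b)+κ(x)), the equality β(b) + κ(x) = κ(b·x) + β(b) holds for all b ∈ B and x ∈ X. -/
/-- Lemma 1.7: `β(b) + κ(x) = κ(b·x) + β(b)`. -/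
theorem stmt5 {X A B : Type*} [AddZeroClass X] [AddZeroClass A] [AddZeroClass B]
    (E : SplitExt X A B) :
    ∀ (b : B) (x : X), E.be b + E.kap x = E.kap (E.act b x) + E.be b := by
  intro b x
  have h := E.split (E.be b + E.kap x)
  rw [E.al_add, E.al_be, E.al_kap, add_zero] at h; exact h.symm
end

section
/- Given a split extension of unitary magmas (X, A, B, κ, λ, α, β), the map ψ : X ⋊ B → A defined by ψ(x,b) = κ(x)+β(b) is a magma homomorphism, where X ⋊ B carries the associated action b·x = λ(β(b)+κ(x)) and addition (x,b)+(x',b') = (x + b·x', b+b'). -/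
/-- Lemma 1.8: `ψ(x,b) = κ(x)+β(b)` is a magma homomorphism from
`X ⋊ B` (with the associated action) to `A`. -/
theorem stmt7 {X A B : Type*} [AddZeroClass X] [AddZeroClass A] [AddZeroClass B]
    (E : SplitExt X A B) :
    (E.kap (0 : X) + E.be (0 : B) = 0) ∧
    (∀ p q : X × B,
      E.kap (sadd E.act p q).1 + E.be (sadd E.act p q).2 =
        (E.kap p.1 + E.be p.2) + (E.kap q.1 + E.be q.2)) := by
  have key : ∀ b x, E.kap (E.act b x) + E.be b = E.be b + E.kap x := by
    intro b x
    have h := E.split (E.be b + E.kap x)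
    have hal : E.al (E.be b + E.kap x) = b := by
      rw [E.al_add, E.al_be, E.al_kap, add_zero]
    rw [hal] at h
    exact h
  refine ⟨by rw [E.kap_zero, E.be_zero, add_zero], ?_⟩
  rintro ⟨x, b⟩ ⟨x', b'⟩
  simp only [sadd]
  rw [E.kap_add, E.be_add]
  conv_rhs => rw [E.assoc_right (E.kap x + E.be b) x' b', ← E.assoc_left x b (E.kap x'),
    ← key b x', E.assoc_right (E.kap x) (E.act b x') b, ← E.kap_add,
    ← E.assoc_left (x + E.act b x') b (E.be b'), E.kap_add]
end

section
/- Given a split extension of unitary magmas (X, A, B, κ, λ, α, β) with associated action b·x = λ(β(b)+κ(x)), the addition formula (κ(x)+β(b)) + (κ(x')+β(b')) = κ(x + b·x') + β(b+b') holds for all x,x' ∈ X and b,b' ∈ B. -/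
/-- Formula (21): `(κ(x)+β(b)) + (κ(x')+β(b')) = κ(x + b·x') + β(b+b')`. -/
theorem stmt8 {X A B : Type*} [AddZeroClass X] [AddZeroClass A] [AddZeroClass B]
    (E : SplitExt X A B) :
    ∀ (x x' : X) (b b' : B),
      (E.kap x + E.be b) + (E.kap x' + E.be b') =
        E.kap (x + E.act b x') + E.be (b + b') := by
  intro x x' b b'
  have hα : E.al (E.be b + E.kap x') = b := by
    rw [E.al_add, E.al_be, E.al_kap, add_zero]
  have key : E.kap x + (E.be b + E.kap x') =
      E.kap (x + E.act b x') + E.be b := by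
    conv_lhs => rw [← E.split (E.be b + E.kap x')]
    rw [hα, E.assoc_right, ← E.kap_add]
    rfl
  calc (E.kap x + E.be b) + (E.kap x' + E.be b')
      = ((E.kap x + E.be b) + E.kap x') + E.be b' := E.assoc_right _ _ _
    _ = (E.kap x + (E.be b + E.kap x')) + E.be b' := by rw [E.assoc_left]
    _ = (E.kap (x + E.act b x') + E.be b) + E.be b' := by rw [key]
    _ = E.kap (x + E.act b x') + (E.be b + E.be b') := (E.assoc_left _ _ _).symm
    _ = E.kap (x + E.act b x') + E.be (b + b') := by rw [← E.be_add]
end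

section
/- In a split extension of unitary magmas (X, A, B, κ, λ, α, β), the homomorphism κ is a kernel of α: κ is injective, ακ = 0, and for every magma homomorphism g : C → A with αg = 0 there exists a unique magma homomorphism g' : C → X with κg' = g. -/
/-- Lemma 1.12(c): in a split extension, `κ` is a kernel of `α`: it is
injective, `ακ = 0`, and every magma homomorphism `g : C → A` with
`αg = 0` factors uniquely through `κ` by a magma homomorphism. -/
theorem stmt10 {X A B : Type*} [AddZeroClass X] [AddZeroClass A] [AddZeroClass B]
    (E : SplitExt X A B) :
    Function.Injective E.kap ∧
    (∀ x : X, E.al (E.kap x) = 0) ∧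
    (∀ (C : Type) [AddZeroClass C] (g : C → A),
      (g 0 = 0) → (∀ c c', g (c + c') = g c + g c') →
      (∀ c, E.al (g c) = 0) →
      ∃! g' : C → X,
        (g' 0 = 0 ∧ ∀ c c', g' (c + c') = g' c + g' c') ∧
        ∀ c, E.kap (g' c) = g c) := by
  refine ⟨fun x y h => by rw [← E.lam_kap x, h, E.lam_kap], E.al_kap, ?_⟩
  intro C _ g g0 gadd gal
  have key : ∀ c, E.kap (E.lam (g c)) = g c := fun c => by
    have := E.split (g c)
    rwa [gal, E.be_zero, add_zero] at this
  refine ⟨fun c => E.lam (g c), ⟨⟨show E.lam (g 0) = 0 by rw [g0, E.lam_zero], fun c c' => ?_⟩, key⟩, ?_⟩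
  · show E.lam (g (c + c')) = E.lam (g c) + E.lam (g c')
    rw [gadd, ← key c, ← key c', ← E.kap_add]; simp [E.lam_kap]
  · intro g' ⟨_, hk⟩
    funext c
    rw [← hk c, E.lam_kap]
end

section
/- In a split extension of unitary magmas (X, A, B, κ, λ, α, β), the homomorphism α is a cokernel of κ: for every unitary magma C and magma homomorphism s : A → C with sκ = 0, the homomorphism t = sβ : B → C satisfies tα = s, and t is the unique magma homomorphism with this property. -/
/-- Lemma 1.12(d): in a split extension, `α` is a cokernel of `κ`: for any
magma homomorphism `s : A → C` with `sκ = 0`, the homomorphism `t = sβ`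
satisfies `tα = s` and is the unique magma homomorphism with this property. -/
theorem stmt11 {X A B : Type*} [AddZeroClass X] [AddZeroClass A] [AddZeroClass B]
    (E : SplitExt X A B)
    {C : Type*} [AddZeroClass C] (s : A → C)
    (hs0 : s 0 = 0) (hsadd : ∀ a a', s (a + a') = s a + s a')
    (hsk : ∀ x : X, s (E.kap x) = 0) :
    (((s ∘ E.be) 0 = 0) ∧ (∀ b b', (s ∘ E.be) (b + b') = (s ∘ E.be) b + (s ∘ E.be) b')) ∧
    (∀ a : A, (s ∘ E.be) (E.al a) = s a) ∧
    (∀ t' : B → C,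
      (t' 0 = 0) → (∀ b b', t' (b + b') = t' b + t' b') →
      (∀ a : A, t' (E.al a) = s a) → t' = s ∘ E.be) := by
  have key : ∀ a, s (E.be (E.al a)) = s a := by
    intro a
    conv_rhs => rw [← E.split a, hsadd, hsk, zero_add]
  refine ⟨⟨by simp [E.be_zero, hs0], fun b b' => by simp [E.be_add, hsadd]⟩, key, ?_⟩
  intro t' _ _ ht
  funext b
  simpa [key, E.al_be] using ht (E.be b)
end

section
/- Let (f,u,p) be a morphism of split extensions of unitary magmas from E = (B,X,A,α,β,κ,λ) to E' = (B',X',A',α',β',κ',λ'), where f, u, p are magma homomorphisms satisfying pκ = κ'u and pβ = β'f. Then automatically λ'p = uλ and α'p = fα. -/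
/-- Remark 2.2 (first half): for magma homomorphisms `f, u, p` between split
extensions, `pκ = κ'u` and `pβ = β'f` imply `λ'p = uλ` and `α'p = fα`. -/
theorem stmt12 {X A B X' A' B' : Type*}
    [AddZeroClass X] [AddZeroClass A] [AddZeroClass B]
    [AddZeroClass X'] [AddZeroClass A'] [AddZeroClass B']
    (E : SplitExt X A B) (E' : SplitExt X' A' B')
    (f : B → B') (u : X → X') (p : A → A')
    (hf0 : f 0 = 0) (hfadd : ∀ b b', f (b + b') = f b + f b')
    (hu0 : u 0 = 0) (huadd : ∀ x x', u (x + x') = u x + u x')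
    (hp0 : p 0 = 0) (hpadd : ∀ a a', p (a + a') = p a + p a')
    (hpk : ∀ x, p (E.kap x) = E'.kap (u x))
    (hpb : ∀ b, p (E.be b) = E'.be (f b)) :
    (∀ a, E'.lam (p a) = u (E.lam a)) ∧ (∀ a, E'.al (p a) = f (E.al a)) := by
  have key : ∀ a, p a = E'.kap (u (E.lam a)) + E'.be (f (E.al a)) := by
    intro a
    conv_lhs => rw [← E.split a]
    rw [hpadd, hpk, hpb]
  constructor
  · intro a
    rw [key a, E'.nondis]
  · intro a
    rw [key a, E'.al_add, E'.al_kap, E'.al_be, zero_add]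
end

section
/- Let (f,u,p) be a triple of magma homomorphisms between split extensions of unitary magmas E = (B,X,A,α,β,κ,λ) and E' = (B',X',A',α',β',κ',λ') satisfying λ'p = uλ and α'p = fα. Then automatically pκ = κ'u and pβ = β'f. -/
/-- Remark 2.2 (second half): for magma homomorphisms `f, u, p` between split
extensions, `λ'p = uλ` and `α'p = fα` imply `pκ = κ'u` and `pβ = β'f`. -/
theorem stmt13 {X A B X' A' B' : Type*}
    [AddZeroClass X] [AddZeroClass A] [AddZeroClass B]
    [AddZeroClass X'] [AddZeroClass A'] [AddZeroClass B']
    (E : SplitExt X A B) (E' : SplitExt X' A' B')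
    (f : B → B') (u : X → X') (p : A → A')
    (hf0 : f 0 = 0) (hfadd : ∀ b b', f (b + b') = f b + f b')
    (hu0 : u 0 = 0) (huadd : ∀ x x', u (x + x') = u x + u x')
    (hp0 : p 0 = 0) (hpadd : ∀ a a', p (a + a') = p a + p a')
    (hlp : ∀ a, E'.lam (p a) = u (E.lam a))
    (hap : ∀ a, E'.al (p a) = f (E.al a)) :
    (∀ x, p (E.kap x) = E'.kap (u x)) ∧ (∀ b, p (E.be b) = E'.be (f b)) := by
  have key : ∀ a, p a = E'.kap (u (E.lam a)) + E'.be (f (E.al a)) := by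
    intro a
    have := E'.split (p a)
    rw [hlp, hap] at this
    exact this.symm
  constructor
  · intro x
    rw [key (E.kap x), E.lam_kap, E.al_kap, hf0, E'.be_zero, add_zero]
  · intro b
    rw [key (E.be b), E.lam_be, E.al_be, hu0, E'.kap_zero, zero_add]
end

section
/- Let E = (B,X,A,α,β,κ,λ) and E' = (B',X',A',α',β',κ',λ') be split extensions of unitary magmas with associated actions, and let f : B → B', u : X → X' be magma homomorphisms satisfying u(b·x) = f(b)·u(x) for all b ∈ B, x ∈ X. Then the map p : A → A' defined by p(a) = κ'(u(λ(a))) + β'(f(α(a))) is a magma homomorphism satisfying pκ = κ'u and pβ = β'f. -/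
lemma splitext_key {X A B : Type*} [AddZeroClass X] [AddZeroClass A] [AddZeroClass B]
    (E : SplitExt X A B) (x x' : X) (b b' : B) :
    (E.kap x + E.be b) + (E.kap x' + E.be b') =
      E.kap (x + E.act b x') + E.be (b + b') := by
  have h1 : E.be b + E.kap x' = E.kap (E.act b x') + E.be b := by
    have := E.split (E.be b + E.kap x')
    rw [show E.al (E.be b + E.kap x') = b by
      rw [E.al_add, E.al_be, E.al_kap, add_zero]] at this
    exact this.symm
  calc (E.kap x + E.be b) + (E.kap x' + E.be b')
      = ((E.kap x + E.be b) + E.kap x') + E.be b' := (E.assoc_right _ _ _)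
    _ = (E.kap x + (E.be b + E.kap x')) + E.be b' := by rw [E.assoc_left]
    _ = (E.kap x + (E.kap (E.act b x') + E.be b)) + E.be b' := by rw [h1]
    _ = ((E.kap x + E.kap (E.act b x')) + E.be b) + E.be b' := by rw [E.assoc_mid]
    _ = (E.kap (x + E.act b x') + E.be b) + E.be b' := by rw [E.kap_add]
    _ = E.kap (x + E.act b x') + (E.be b + E.be b') := (E.assoc_mid _ _ _).symm
    _ = E.kap (x + E.act b x') + E.be (b + b') := by rw [E.be_add]

/-- Lemma 2.5, (c) ⇒ (a): given magma homomorphisms `f : B → B'`, `u : X → X'`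
equivariant for the associated actions, the map `p(a) = κ'(u(λ(a))) + β'(f(α(a)))`
is a magma homomorphism with `pκ = κ'u` and `pβ = β'f`. -/
theorem stmt15 {X A B X' A' B' : Type*}
    [AddZeroClass X] [AddZeroClass A] [AddZeroClass B]
    [AddZeroClass X'] [AddZeroClass A'] [AddZeroClass B']
    (E : SplitExt X A B) (E' : SplitExt X' A' B')
    (f : B → B') (u : X → X')
    (hf0 : f 0 = 0) (hfadd : ∀ b b', f (b + b') = f b + f b')
    (hu0 : u 0 = 0) (huadd : ∀ x x', u (x + x') = u x + u x')
    (hequiv : ∀ (b : B) (x : X), u (E.act b x) = E'.act (f b) (u x)) :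
    let p : A → A' := fun a => E'.kap (u (E.lam a)) + E'.be (f (E.al a))
    (p 0 = 0) ∧ (∀ a a', p (a + a') = p a + p a') ∧
    (∀ x, p (E.kap x) = E'.kap (u x)) ∧ (∀ b, p (E.be b) = E'.be (f b)) := by
  intro p
  refine ⟨?_, ?_, ?_, ?_⟩
  · show E'.kap (u (E.lam 0)) + E'.be (f (E.al 0)) = 0
    rw [E.lam_zero, E.al_zero, hu0, hf0, E'.kap_zero, E'.be_zero, add_zero]
  · intro a a'
    have ha := (E.split a).symm
    have ha' := (E.split a').symm
    have key : a + a' = E.kap (E.lam a + E.act (E.al a) (E.lam a'))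
        + E.be (E.al a + E.al a') := by
      conv_lhs => rw [ha, ha']
      exact splitext_key E _ _ _ _
    show E'.kap (u (E.lam (a + a'))) + E'.be (f (E.al (a + a'))) = _
    rw [key, E.nondis, show E.al (E.kap (E.lam a + E.act (E.al a) (E.lam a'))
        + E.be (E.al a + E.al a')) = E.al a + E.al a' by
      rw [E.al_add, E.al_kap, E.al_be, zero_add]]
    rw [huadd, hequiv, hfadd]
    exact (splitext_key E' (u (E.lam a)) (u (E.lam a')) (f (E.al a)) (f (E.al a'))).symm
  · intro x
    show E'.kap (u (E.lam (E.kap x))) + E'.be (f (E.al (E.kap x))) = _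
    rw [E.lam_kap, E.al_kap, hf0, E'.be_zero, add_zero]
  · intro b
    show E'.kap (u (E.lam (E.be b))) + E'.be (f (E.al (E.be b))) = _
    rw [E.lam_be, E.al_be, hu0, E'.kap_zero, zero_add]
end

section
/- Let D act on a unitary magma Y and let Y ⋊ D act on a unitary magma X. The partial associativity identity (x,(y,0)) + ((0,(0,d)) + (x',(y',d'))) = ((x,(y,0)) + (0,(0,d))) + (x',(y',d')) holds in X ⋊ (Y ⋊ D) for all x,x' ∈ X, y,y' ∈ Y, d,d' ∈ D if and only if (y,0)·((0,d)·x) = (y,d)·x for all x ∈ X, y ∈ Y, d ∈ D. -/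
/-- Addition on the semidirect product `Y ⋊ D` for an action `actD : D → Y → Y`. -/
def addYD {Y D : Type*} [AddZeroClass Y] [AddZeroClass D]
    (actD : D → Y → Y) (p q : Y × D) : Y × D :=
  (p.1 + actD p.2 q.1, p.2 + q.2)

/-- Addition on the iterated semidirect product `X ⋊ (Y ⋊ D)`, for an action
`actW : (Y × D) → X → X` of `Y ⋊ D` on `X`. -/
def addXW {X Y D : Type*} [AddZeroClass X] [AddZeroClass Y] [AddZeroClass D]
    (actD : D → Y → Y) (actW : Y × D → X → X) (p q : X × (Y × D)) : X × (Y × D) :=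
  (p.1 + actW p.2 q.1, addYD actD p.2 q.2)

/-- Lemma 3.3 (b) ⇔ (c): the partial associativity identity
`(x,(y,0)) + ((0,(0,d)) + (x',(y',d'))) = ((x,(y,0)) + (0,(0,d))) + (x',(y',d'))`
holds in `X ⋊ (Y ⋊ D)` for all elements iff `(y,0)·((0,d)·x) = (y,d)·x` for all
`x ∈ X`, `y ∈ Y`, `d ∈ D`. -/
theorem stmt16 {X Y D : Type*} [AddZeroClass X] [AddZeroClass Y] [AddZeroClass D]
    (actD : D → Y → Y)
    (hD0 : ∀ y : Y, actD 0 y = y) (hD0' : ∀ d : D, actD d 0 = 0)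
    (actW : Y × D → X → X)
    (hW0 : ∀ x : X, actW (0, 0) x = x) (hW0' : ∀ w : Y × D, actW w 0 = 0) :
    (∀ (x x' : X) (y y' : Y) (d d' : D),
        addXW actD actW (x, (y, 0)) (addXW actD actW (0, (0, d)) (x', (y', d'))) =
          addXW actD actW (addXW actD actW (x, (y, 0)) (0, (0, d))) (x', (y', d'))) ↔
    (∀ (x : X) (y : Y) (d : D), actW (y, 0) (actW (0, d) x) = actW (y, d) x) := by
  simp only [addXW, addYD, hD0, hD0', hW0, hW0', zero_add, add_zero, Prod.mk.injEq]
  constructor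
  · intro h x y d
    have := h 0 x y 0 d 0
    simpa using this
  · intro h x x' y y' d d'
    simp [h]
end

section
/- Let D act on Y and Y ⋊ D act on X (actions of unitary magmas). Then the induced operation of D on X ⋊ (Y × {0}) ≅ X ⋊ Y, given by d·(x,y) = ((0,d)·x, d·y), together with the iterated semidirect product structure, satisfies the counterparts of the split-extension axioms (11)-(14), (16), (17): in particular ν'μ' = 1, (γα)(βδ) = 1, ν'βδ = 0, γαμ' = 0, μ'ν'(a) + βδγα(a) = a, ν'(μ'(x,(y,0)) + βδ(d)) = (x,(y,0)), and the two partial associativity laws μ'(x',(y',0)) + ((x,(y,d)) + βδ(d')) = (μ'(x',(y',0)) + (x,(y,d))) + βδ(d') and (x,(y,d)) + (μ'(x',(y',0)) + βδ(d')) = ((x,(y,d)) + μ'(x',(y',0))) + βδ(d'), where μ' : X ⋊ (Y × {0}) → X ⋊ (Y ⋊ D) is inclusion, ν'(x,(y,d)) = (x,(y,0)), α(x,(y,d)) = (y,d), β(y,d) = (0,(y,d)), γ(y,d) = d, δ(d) = (0,d). -/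
/-- Addition on `X ⋊ Y` (i.e. `X ⋊ (Y × {0})`), where `Y` acts on `X` by
restriction of the action of `Y ⋊ D`: `(x,y)+(x',y') = (x + (y,0)·x', y + y')`. -/
def addXY {X Y D : Type*} [AddZeroClass X] [AddZeroClass Y] [AddZeroClass D]
    (actW : Y × D → X → X) (p q : X × Y) : X × Y :=
  (p.1 + actW (p.2, 0) q.1, p.2 + q.2)

/-- Lemma 3.2: the seven-tuple
`(D, X ⋊ (Y × {0}), X ⋊ (Y ⋊ D), γα, βδ, μ', ν')` satisfies the counterparts of
the split-extension equalities (11)-(14), (16), (17). Here `X ⋊ (Y × {0}) ≅ X ⋊ Y`,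
`μ'(x,y) = (x,(y,0))`, `ν'(x,(y,d)) = (x,(y,0))`, `α(x,w) = w`, `β(w) = (0,w)`,
`γ(y,d) = d`, `δ(d) = (0,d)`. -/
theorem stmt17 {X Y D : Type*} [AddZeroClass X] [AddZeroClass Y] [AddZeroClass D]
    (actD : D → Y → Y)
    (hD0 : ∀ y : Y, actD 0 y = y) (hD0' : ∀ d : D, actD d 0 = 0)
    (actW : Y × D → X → X)
    (hW0 : ∀ x : X, actW (0, 0) x = x) (hW0' : ∀ w : Y × D, actW w 0 = 0) :
    let mu' : X × Y → X × (Y × D) := fun z => (z.1, (z.2, 0))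
    let nu' : X × (Y × D) → X × Y := fun a => (a.1, a.2.1)
    let al : X × (Y × D) → Y × D := fun a => a.2
    let be : Y × D → X × (Y × D) := fun w => ((0 : X), w)
    let ga : Y × D → D := fun w => w.2
    let de : D → Y × D := fun d => ((0 : Y), d)
    -- (29): ν'μ' = 1 and (γα)(βδ) = 1
    (∀ z : X × Y, nu' (mu' z) = z) ∧
    (∀ d : D, ga (al (be (de d))) = d) ∧
    -- (30): ν'βδ = 0 and γαμ' = 0
    (∀ d : D, nu' (be (de d)) = ((0 : X), (0 : Y))) ∧
    (∀ z : X × Y, ga (al (mu' z)) = 0) ∧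
    -- (31): μ'ν' + βδγα = 1
    (∀ a : X × (Y × D), addXW actD actW (mu' (nu' a)) (be (de (ga (al a)))) = a) ∧
    -- (32): ν'(μ'(x,(y,0)) + βδ(d)) = (x,(y,0))
    (∀ (z : X × Y) (d : D), nu' (addXW actD actW (mu' z) (be (de d))) = z) ∧
    -- (33): μ'(x',(y',0)) + ((x,(y,d)) + βδ(d')) = (μ'(x',(y',0)) + (x,(y,d))) + βδ(d')
    (∀ (z : X × Y) (a : X × (Y × D)) (d' : D),
      addXW actD actW (mu' z) (addXW actD actW a (be (de d'))) =
        addXW actD actW (addXW actD actW (mu' z) a) (be (de d'))) ∧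
    -- (34): (x,(y,d)) + (μ'(x',(y',0)) + βδ(d')) = ((x,(y,d)) + μ'(x',(y',0))) + βδ(d')
    (∀ (a : X × (Y × D)) (z : X × Y) (d' : D),
      addXW actD actW a (addXW actD actW (mu' z) (be (de d'))) =
        addXW actD actW (addXW actD actW a (mu' z)) (be (de d'))) := by
  intro mu' nu' al be ga de
  refine ⟨fun z => rfl, fun d => rfl, fun d => by simp [nu', be, de],
    fun z => rfl, ?_, ?_, ?_, ?_⟩
  · rintro ⟨x, y, d⟩
    simp [mu', nu', al, be, ga, de, addXW, addYD, hW0', hD0', hD0, hW0]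
  · rintro ⟨x, y⟩ d
    simp [mu', nu', al, be, ga, de, addXW, addYD, hW0', hD0', hD0, hW0]
  · rintro ⟨x, y⟩ ⟨x', y', d⟩ d'
    simp [mu', nu', al, be, ga, de, addXW, addYD, hW0', hD0', hD0, hW0]
  · rintro ⟨x, y, d⟩ ⟨x', y'⟩ d'
    simp [mu', nu', al, be, ga, de, addXW, addYD, hW0', hD0', hD0, hW0]
end

section
/- Let D act on Y and Y ⋊ D act on X, with both actions firm: d'·(d·y) = (d'+d)·y for all d,d' ∈ D, y ∈ Y, and w'·(w·x) = (w'+w)·x for all w,w' ∈ Y ⋊ D, x ∈ X. Then the induced action of D on X ⋊ Y given by d·(x,y) = ((0,d)·x, d·y) is firm: d'·(d·(x,y)) = (d'+d)·(x,y) for all d,d' ∈ D, x ∈ X, y ∈ Y. -/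
/-- Theorem 3.7: if the action of `D` on `Y` and the action of `Y ⋊ D` on `X`
are both firm, then the induced action of `D` on `X ⋊ Y`, given by
`d·(x,y) = ((0,d)·x, d·y)`, is firm. -/
theorem stmt18 {X Y D : Type*} [AddZeroClass X] [AddZeroClass Y] [AddZeroClass D]
    (actD : D → Y → Y)
    (hD0 : ∀ y : Y, actD 0 y = y) (hD0' : ∀ d : D, actD d 0 = 0)
    (hDfirm : ∀ (d d' : D) (y : Y), actD d' (actD d y) = actD (d' + d) y)
    (actW : Y × D → X → X)
    (hW0 : ∀ x : X, actW (0, 0) x = x) (hW0' : ∀ w : Y × D, actW w 0 = 0)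
    (hWfirm : ∀ (w w' : Y × D) (x : X),
      actW w' (actW w x) = actW (addYD actD w' w) x) :
    let actZ : D → X × Y → X × Y := fun d z => (actW ((0 : Y), d) z.1, actD d z.2)
    ∀ (d d' : D) (z : X × Y), actZ d' (actZ d z) = actZ (d' + d) z := by
  intro actZ d d' z
  simp only [actZ, hWfirm, hDfirm, addYD, hD0', zero_add, add_zero]
end

section
/- Let D act on Y and Y ⋊ D act on X, with both actions firm and distributive: d·(y+y') = d·y + d·y' for all d ∈ D, y,y' ∈ Y, and w·(x+x') = w·x + w·x' for all w ∈ Y ⋊ D, x,x' ∈ X. Then the induced action of D on X ⋊ Y given by d·(x,y) = ((0,d)·x, d·y) is distributive: d·((x,y)+(x',y')) = d·(x,y) + d·(x',y') for all d ∈ D, x,x' ∈ X, y,y' ∈ Y. -/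
/-- Subsection 4.3(c): if the action of `D` on `Y` and the action of `Y ⋊ D`
on `X` are both firm and distributive, then the induced action of `D` on
`X ⋊ Y`, `d·(x,y) = ((0,d)·x, d·y)`, is distributive. -/
theorem stmt19 {X Y D : Type*} [AddZeroClass X] [AddZeroClass Y] [AddZeroClass D]
    (actD : D → Y → Y)
    (hD0 : ∀ y : Y, actD 0 y = y) (hD0' : ∀ d : D, actD d 0 = 0)
    (hDfirm : ∀ (d d' : D) (y : Y), actD d' (actD d y) = actD (d' + d) y)
    (hDdist : ∀ (d : D) (y y' : Y), actD d (y + y') = actD d y + actD d y')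
    (actW : Y × D → X → X)
    (hW0 : ∀ x : X, actW (0, 0) x = x) (hW0' : ∀ w : Y × D, actW w 0 = 0)
    (hWfirm : ∀ (w w' : Y × D) (x : X),
      actW w' (actW w x) = actW (addYD actD w' w) x)
    (hWdist : ∀ (w : Y × D) (x x' : X), actW w (x + x') = actW w x + actW w x') :
    let actZ : D → X × Y → X × Y := fun d z => (actW ((0 : Y), d) z.1, actD d z.2)
    ∀ (d : D) (z z' : X × Y),
      actZ d (addXY actW z z') = addXY actW (actZ d z) (actZ d z') := by
  intro actZ d z z'
  simp only [actZ, addXY, addYD, hWdist, hDdist, hWfirm, hD0, hD0', add_zero, zero_add]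
end
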